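/- For any w_0 ∈ (0, α), the thresholds defined by α_t = [(τ − λ)( w_0 γ̃_{S_0(t)} + (α − w_0) ∑_{j≥1} δ^{t−ρ_j} γ_{S_j(t)} )] ∧ λ satisfy, for every T ≥ 1, the bound ∑_{t=1}^T δ^{T−t} α_t · 1{λ < p_t ≤ τ}/(τ − λ) ≤ α · max(R_δ(T), 1). -/

import Mathlib

/-- The time `ρ_j` of the `j`-th rejection: `min {t ≥ 0 : ∑_{i=1}^t R_i ≥ j}`,
equal to `⊤` (infinity) if no such time exists. -/
noncomputable def rejTime (R : ℕ → ℝ) (j : ℕ) : ℕ∞ :=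
  sInf {n : ℕ∞ | ∃ m : ℕ, n = (m : ℕ∞) ∧ (j : ℝ) ≤ ∑ i ∈ Finset.Icc 1 m, R i}

open Classical in
/-- The number of candidate `p`-values `∑_{i=a}^b 1{λ < p_i ≤ τ}`. -/
noncomputable def candBetween (p : ℕ → ℝ) (lam tau : ℝ) (a b : ℕ) : ℕ :=
  ((Finset.Icc a b).filter fun i => lam < p i ∧ p i ≤ tau).card

/-- The candidate count `S_0(t) = 1 + ∑_{i=1}^{t−1} 1{λ < p_i ≤ τ}` (with `ρ_0 = −∞`). -/
noncomputable def candCount0 (p : ℕ → ℝ) (lam tau : ℝ) (t : ℕ) : ℕ :=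
  1 + candBetween p lam tau 1 (t - 1)

/-- The term `δ^{t−ρ_j} γ_{S_j(t)}` where
`S_j(t) = 1{t > ρ_j} + ∑_{i=ρ_j+1}^{t−1} 1{λ < p_i ≤ τ}`, interpreted as `0`
when `ρ_j = ∞`. -/
noncomputable def addisTerm (δ : ℝ) (γ : ℤ → ℝ) (p : ℕ → ℝ) (lam tau : ℝ)
    (t : ℕ) (ρ : ℕ∞) : ℝ :=
  ρ.recTopCoe 0 fun r =>
    δ ^ (t - r) * γ ((if r < t then 1 else 0) + candBetween p lam tau (r + 1) (t - 1))

/- ------------------ auxiliary lemmas ------------------ -/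

lemma candBetween_eq_zero (p : ℕ → ℝ) (lam tau : ℝ) {a b : ℕ} (h : b < a) :
    candBetween p lam tau a b = 0 := by
  classical
  simp [candBetween, Finset.Icc_eq_empty_of_lt h]

lemma candBetween_succ (p : ℕ → ℝ) (lam tau : ℝ) {a b : ℕ} (h : a ≤ b + 1) :
    candBetween p lam tau a (b + 1)
      = candBetween p lam tau a b + (if lam < p (b + 1) ∧ p (b + 1) ≤ tau then 1 else 0) := by
  classical
  unfold candBetween
  rw [← Finset.insert_Icc_right_eq_Icc_add_one h, Finset.filter_insert]
  by_cases hc : lam < p (b + 1) ∧ p (b + 1) ≤ tau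
  · rw [if_pos hc, if_pos hc, Finset.card_insert_of_notMem]
    simp [Finset.mem_Icc]
  · rw [if_neg hc, if_neg hc, add_zero]

lemma addisTerm_coe (δ : ℝ) (γ : ℤ → ℝ) (p : ℕ → ℝ) (lam tau : ℝ) (t m : ℕ) :
    addisTerm δ γ p lam tau t (m : ℕ∞)
      = δ ^ (t - m) * γ ((if m < t then 1 else 0) + candBetween p lam tau (m + 1) (t - 1)) := by
  simp [addisTerm]

lemma addisTerm_nonneg (δ : ℝ) (hδ : 0 ≤ δ) (γ : ℤ → ℝ) (hγ : ∀ t, 0 ≤ γ t)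
    (p : ℕ → ℝ) (lam tau : ℝ) (t : ℕ) (ρ : ℕ∞) :
    0 ≤ addisTerm δ γ p lam tau t ρ := by
  cases ρ with
  | top => simp [addisTerm]
  | coe m =>
    rw [addisTerm_coe]
    exact mul_nonneg (pow_nonneg hδ _) (hγ _)

lemma addisTerm_eq_zero_of_le (δ : ℝ) (γ : ℤ → ℝ) (hγ0 : γ 0 = 0)
    (p : ℕ → ℝ) (lam tau : ℝ) {t m : ℕ} (h : t ≤ m) :
    addisTerm δ γ p lam tau t (m : ℕ∞) = 0 := by
  rw [addisTerm_coe, if_neg (by omega), candBetween_eq_zero p lam tau (by omega)]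
  simp [hγ0]

/-- Core counting lemma for `γ`. -/
lemma gamma_block (γ : ℤ → ℝ) (hnn : ∀ t, 0 ≤ γ t)
    (p : ℕ → ℝ) (lam tau : ℝ) (r : ℕ) :
    ∀ T : ℕ, ∑ t ∈ Finset.Icc (r + 1) T,
        (if lam < p t ∧ p t ≤ tau then (1 : ℝ) else 0) *
          γ (1 + (candBetween p lam tau (r + 1) (t - 1) : ℤ))
      ≤ ∑ i ∈ Finset.Icc 1 (candBetween p lam tau (r + 1) T), γ (i : ℤ) := by
  intro T
  induction T with
  | zero =>
    rw [Finset.Icc_eq_empty_of_lt (Nat.succ_pos r), Finset.sum_empty]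
    exact Finset.sum_nonneg fun i _ => hnn _
  | succ T ih =>
    by_cases hrT : r + 1 ≤ T + 1
    · rw [← Finset.insert_Icc_right_eq_Icc_add_one hrT,
        Finset.sum_insert (by simp), candBetween_succ p lam tau hrT]
      by_cases hc : lam < p (T + 1) ∧ p (T + 1) ≤ tau
      · rw [if_pos hc, if_pos hc, ← Finset.insert_Icc_right_eq_Icc_add_one
          (by omega : 1 ≤ candBetween p lam tau (r + 1) T + 1),
          Finset.sum_insert (by simp)]
        have harg : (1 : ℤ) + (candBetween p lam tau (r + 1) (T + 1 - 1) : ℤ)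
            = ((candBetween p lam tau (r + 1) T + 1 : ℕ) : ℤ) := by
          rw [show T + 1 - 1 = T from rfl]
          push_cast
          ring
        rw [one_mul]
        calc γ (1 + (candBetween p lam tau (r + 1) (T + 1 - 1) : ℤ))
              + ∑ t ∈ Finset.Icc (r + 1) T,
                (if lam < p t ∧ p t ≤ tau then (1 : ℝ) else 0) *
                  γ (1 + (candBetween p lam tau (r + 1) (t - 1) : ℤ))
            ≤ γ (1 + (candBetween p lam tau (r + 1) (T + 1 - 1) : ℤ))
              + ∑ i ∈ Finset.Icc 1 (candBetween p lam tau (r + 1) T), γ (i : ℤ) := by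
              exact add_le_add_right ih _
          _ = γ (((candBetween p lam tau (r + 1) T + 1 : ℕ) : ℤ))
              + ∑ i ∈ Finset.Icc 1 (candBetween p lam tau (r + 1) T), γ (i : ℤ) := by
              rw [harg]
      · rw [if_neg hc, if_neg hc, add_zero, zero_mul, zero_add]
        exact ih
    · rw [Finset.Icc_eq_empty_of_lt (by omega), Finset.sum_empty]
      exact Finset.sum_nonneg fun i _ => hnn _

/-- Core counting lemma for `γ'` with decay weights. -/
lemma gamma'_block (δ : ℝ) (hδ0 : 0 ≤ δ) (hδ1 : δ ≤ 1)
    (γ' : ℕ → ℝ) (hnn : ∀ t, 1 ≤ t → 0 ≤ γ' t)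
    (p : ℕ → ℝ) (lam tau : ℝ) :
    ∀ T : ℕ, ∑ t ∈ Finset.Icc 1 T,
        δ ^ (T - t) * ((if lam < p t ∧ p t ≤ tau then (1 : ℝ) else 0) *
          γ' (1 + candBetween p lam tau 1 (t - 1)))
      ≤ ∑ i ∈ Finset.Icc 1 (candBetween p lam tau 1 T),
          δ ^ (candBetween p lam tau 1 T - i) * γ' i := by
  intro T
  induction T with
  | zero =>
    rw [candBetween_eq_zero p lam tau (by omega)]
    simp
  | succ T ih =>
    have hRHSnn : ∀ k : ℕ, 0 ≤ ∑ i ∈ Finset.Icc 1 k, δ ^ (k - i) * γ' i := by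
      intro k
      refine Finset.sum_nonneg fun i hi => ?_
      rw [Finset.mem_Icc] at hi
      exact mul_nonneg (pow_nonneg hδ0 _) (hnn i hi.1)
    have hshift : ∑ t ∈ Finset.Icc 1 T,
        δ ^ (T + 1 - t) * ((if lam < p t ∧ p t ≤ tau then (1 : ℝ) else 0) *
          γ' (1 + candBetween p lam tau 1 (t - 1)))
        = δ * ∑ t ∈ Finset.Icc 1 T,
        δ ^ (T - t) * ((if lam < p t ∧ p t ≤ tau then (1 : ℝ) else 0) *
          γ' (1 + candBetween p lam tau 1 (t - 1))) := by
      rw [Finset.mul_sum]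
      refine Finset.sum_congr rfl fun t ht => ?_
      rw [Finset.mem_Icc] at ht
      rw [show T + 1 - t = (T - t) + 1 by omega, pow_succ]
      ring
    rw [← Finset.insert_Icc_right_eq_Icc_add_one (by omega : 1 ≤ T + 1),
      Finset.sum_insert (by simp), hshift, candBetween_succ p lam tau (by omega : 1 ≤ T + 1)]
    by_cases hc : lam < p (T + 1) ∧ p (T + 1) ≤ tau
    · rw [if_pos hc, if_pos hc]
      set k := candBetween p lam tau 1 T with hk
      have hRHS : ∑ i ∈ Finset.Icc 1 (k + 1), δ ^ (k + 1 - i) * γ' i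
          = γ' (k + 1) + δ * ∑ i ∈ Finset.Icc 1 k, δ ^ (k - i) * γ' i := by
        rw [← Finset.insert_Icc_right_eq_Icc_add_one (by omega : 1 ≤ k + 1),
          Finset.sum_insert (by simp), Finset.mul_sum]
        congr 1
        · simp
        · refine Finset.sum_congr rfl fun i hi => ?_
          rw [Finset.mem_Icc] at hi
          rw [show k + 1 - i = (k - i) + 1 by omega, pow_succ]
          ring
      rw [hRHS]
      have hterm : δ ^ (T + 1 - (T + 1)) * ((1 : ℝ) *
          γ' (1 + candBetween p lam tau 1 (T + 1 - 1))) = γ' (k + 1) := by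
        simp [Nat.add_sub_cancel, hk, add_comm]
      rw [hterm]
      have := mul_le_mul_of_nonneg_left ih hδ0
      linarith
    · rw [if_neg hc, if_neg hc, add_zero, zero_mul, mul_zero, zero_add]
      calc δ * ∑ t ∈ Finset.Icc 1 T,
            δ ^ (T - t) * ((if lam < p t ∧ p t ≤ tau then (1 : ℝ) else 0) *
              γ' (1 + candBetween p lam tau 1 (t - 1)))
          ≤ δ * ∑ i ∈ Finset.Icc 1 (candBetween p lam tau 1 T),
              δ ^ (candBetween p lam tau 1 T - i) * γ' i := mul_le_mul_of_nonneg_left ih hδ0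
        _ ≤ 1 * ∑ i ∈ Finset.Icc 1 (candBetween p lam tau 1 T),
              δ ^ (candBetween p lam tau 1 T - i) * γ' i :=
            mul_le_mul_of_nonneg_right hδ1 (hRHSnn _)
        _ = _ := one_mul _

open Classical in
/-- Number of rejections up to time `m`. -/
noncomputable def cntOnes (R : ℕ → ℝ) (m : ℕ) : ℕ :=
  ((Finset.Icc 1 m).filter fun i => R i = 1).card

lemma sum_R_eq (R : ℕ → ℝ) (hR : ∀ t, R t = 0 ∨ R t = 1) (m : ℕ) :
    ∑ i ∈ Finset.Icc 1 m, R i = (cntOnes R m : ℝ) := by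
  classical
  rw [cntOnes, Finset.card_filter]
  push_cast
  refine Finset.sum_congr rfl fun i _ => ?_
  rcases hR i with h | h <;> simp [h]

lemma cntOnes_le (R : ℕ → ℝ) (m : ℕ) : cntOnes R m ≤ m := by
  classical
  calc cntOnes R m ≤ (Finset.Icc 1 m).card := Finset.card_filter_le _ _
    _ = m := by rw [Nat.card_Icc]; omega

lemma cntOnes_succ (R : ℕ → ℝ) (m : ℕ) :
    cntOnes R (m + 1) = cntOnes R m + (if R (m + 1) = 1 then 1 else 0) := by
  classical
  unfold cntOnes
  rw [← Finset.insert_Icc_right_eq_Icc_add_one (by omega : 1 ≤ m + 1), Finset.filter_insert]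
  by_cases hc : R (m + 1) = 1
  · rw [if_pos hc, if_pos hc, Finset.card_insert_of_notMem]
    simp [Finset.mem_Icc]
  · rw [if_neg hc, if_neg hc, add_zero]

lemma rejTime_spec (R : ℕ → ℝ) (hR : ∀ t, R t = 0 ∨ R t = 1) {j m : ℕ}
    (h : rejTime R j = (m : ℕ∞)) :
    j ≤ cntOnes R m ∧ ∀ m' : ℕ, m' < m → cntOnes R m' < j := by
  classical
  set S : Set ℕ∞ := {n : ℕ∞ | ∃ m : ℕ, n = (m : ℕ∞) ∧ (j : ℝ) ≤ ∑ i ∈ Finset.Icc 1 m, R i}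
    with hS
  have hrj : sInf S = (m : ℕ∞) := h
  have hne : S.Nonempty := by
    by_contra hne
    rw [Set.not_nonempty_iff_eq_empty] at hne
    rw [hne, sInf_empty] at hrj
    exact (ENat.top_ne_coe m) hrj
  have hmem : (m : ℕ∞) ∈ S := hrj ▸ csInf_mem hne
  obtain ⟨m₂, hm₂, hle⟩ := hmem
  have hmm : m = m₂ := by exact_mod_cast hm₂
  subst hmm
  constructor
  · rw [sum_R_eq R hR] at hle
    exact_mod_cast hle
  · intro m' hm'
    by_contra hcon
    push_neg at hcon
    have hmem' : ((m' : ℕ∞)) ∈ S := by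
      refine ⟨m', rfl, ?_⟩
      rw [sum_R_eq R hR]
      exact_mod_cast hcon
    have hle' := sInf_le hmem'
    rw [hrj] at hle'
    have : m ≤ m' := by exact_mod_cast hle'
    omega

lemma rejTime_lower (R : ℕ → ℝ) (hR : ∀ t, R t = 0 ∨ R t = 1) {j m : ℕ}
    (h : rejTime R j = (m : ℕ∞)) : j ≤ m :=
  le_trans (rejTime_spec R hR h).1 (cntOnes_le R m)

lemma rejTime_R_one (R : ℕ → ℝ) (hR : ∀ t, R t = 0 ∨ R t = 1) {j m : ℕ}
    (hj : 1 ≤ j) (h : rejTime R j = (m : ℕ∞)) : R m = 1 := by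
  obtain ⟨h1, h2⟩ := rejTime_spec R hR h
  have hm : 1 ≤ m := le_trans hj (rejTime_lower R hR h)
  rcases hR m with h0 | h0
  · exfalso
    have hlt : cntOnes R (m - 1) < j := h2 (m - 1) (by omega)
    have heq : cntOnes R m = cntOnes R (m - 1) := by
      have hs := cntOnes_succ R (m - 1)
      rw [show m - 1 + 1 = m by omega] at hs
      rw [hs, if_neg (by rw [h0]; norm_num), add_zero]
    omega
  · exact h0

lemma rejTime_inj (R : ℕ → ℝ) (hR : ∀ t, R t = 0 ∨ R t = 1) {j j' m : ℕ}
    (hjj : j < j') (h : rejTime R j = (m : ℕ∞)) (h' : rejTime R j' = (m : ℕ∞)) :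
    False := by
  obtain ⟨h1, h2⟩ := rejTime_spec R hR h
  obtain ⟨h1', _⟩ := rejTime_spec R hR h'
  have hm : 1 ≤ m := by
    rcases Nat.eq_zero_or_pos m with h0 | h0
    · subst h0
      have : cntOnes R 0 = 0 := by
        unfold cntOnes
        rw [Finset.Icc_eq_empty_of_lt (by omega)]
        simp
      omega
    · exact h0
  have hlt : cntOnes R (m - 1) < j := h2 (m - 1) (by omega)
  have hs := cntOnes_succ R (m - 1)
  rw [show m - 1 + 1 = m by omega] at hs
  have hstep : cntOnes R m ≤ cntOnes R (m - 1) + 1 := by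
    rw [hs]; split <;> omega
  omega

/-- etc. -/
theorem addis_decay_standard_fdr_oracle_bound (δ α w₀ lam tau : ℝ)
    (hδ : δ ∈ Set.Ioc (0 : ℝ) 1) (hα : α ∈ Set.Ioo (0 : ℝ) 1)
    (hw₀ : w₀ ∈ Set.Ioo (0 : ℝ) α)
    (hlam : 0 < lam) (hlamtau : lam < tau) (htau : tau < 1)
    (γ : ℤ → ℝ) (hγ_nonneg : ∀ t, 0 ≤ γ t) (hγ_zero : ∀ t : ℤ, t ≤ 0 → γ t = 0)
    (hγ_anti : ∀ s t : ℤ, 1 ≤ s → s ≤ t → γ t ≤ γ s)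
    (hγ_sum : ∀ T : ℕ, ∑ t ∈ Finset.Icc 1 T, γ (t : ℤ) ≤ 1)
    (γ' : ℕ → ℝ) (hγ'_pos : ∀ t, 1 ≤ t → 0 < γ' t)
    (hγ'_anti : ∀ s t : ℕ, 1 ≤ s → s ≤ t → γ' t ≤ γ' s)
    (hγ'_sum : ∀ T : ℕ, 1 ≤ T → ∑ t ∈ Finset.Icc 1 T, δ ^ (T - t) * γ' t ≤ 1)
    (p : ℕ → ℝ) (hp01 : ∀ t, p t ∈ Set.Icc (0 : ℝ) 1)
    (R : ℕ → ℝ) (hR : ∀ t, R t = 0 ∨ R t = 1)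
    (A : ℕ → ℝ)
    (hA : ∀ t : ℕ,
      A t = min ((tau - lam) * (w₀ * γ' (candCount0 p lam tau t)
              + (α - w₀) * ∑' j : ℕ, addisTerm δ γ p lam tau t (rejTime R (j + 1)))) lam)
    (T : ℕ) (hT : 1 ≤ T) :
    ∑ t ∈ Finset.Icc 1 T,
        δ ^ (T - t) * A t * (if lam < p t ∧ p t ≤ tau then (1 : ℝ) else 0) / (tau - lam)
      ≤ α * max (∑ t ∈ Finset.Icc 1 T, δ ^ (T - t) * R t) 1 := by
  classical
  obtain ⟨hδ0, hδ1⟩ := hδ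
  obtain ⟨hα0, hα1⟩ := hα
  obtain ⟨hw0, hwα⟩ := hw₀
  have htl : (0 : ℝ) < tau - lam := by linarith
  have hγ00 : γ 0 = 0 := hγ_zero 0 le_rfl
  set F : ℕ → ℝ := fun t => ∑' j : ℕ, addisTerm δ γ p lam tau t (rejTime R (j + 1)) with hFdef
  have hF_nonneg : ∀ t, 0 ≤ F t := fun t =>
    tsum_nonneg fun j => addisTerm_nonneg δ hδ0.le γ hγ_nonneg p lam tau t _
  -- Step 1: pointwise bound
  have key1 : ∀ t ∈ Finset.Icc 1 T,
      δ ^ (T - t) * A t * (if lam < p t ∧ p t ≤ tau then (1 : ℝ) else 0) / (tau - lam)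
        ≤ w₀ * (δ ^ (T - t) * ((if lam < p t ∧ p t ≤ tau then (1 : ℝ) else 0) *
              γ' (1 + candBetween p lam tau 1 (t - 1))))
          + (α - w₀) * (δ ^ (T - t) * ((if lam < p t ∧ p t ≤ tau then (1 : ℝ) else 0) *
              F t)) := by
    intro t _
    by_cases hc : lam < p t ∧ p t ≤ tau
    · rw [if_pos hc]
      have hAt : A t ≤ (tau - lam) * (w₀ * γ' (candCount0 p lam tau t) + (α - w₀) * F t) := by
        rw [hA t]; exact min_le_left _ _
      have hB : A t / (tau - lam) ≤ w₀ * γ' (candCount0 p lam tau t) + (α - w₀) * F t := by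
        rw [div_le_iff₀ htl]
        calc A t ≤ (tau - lam) * (w₀ * γ' (candCount0 p lam tau t) + (α - w₀) * F t) := hAt
          _ = (w₀ * γ' (candCount0 p lam tau t) + (α - w₀) * F t) * (tau - lam) := by ring
      have hcc : candCount0 p lam tau t = 1 + candBetween p lam tau 1 (t - 1) := rfl
      calc δ ^ (T - t) * A t * 1 / (tau - lam)
          = δ ^ (T - t) * (A t / (tau - lam)) := by ring
        _ ≤ δ ^ (T - t) * (w₀ * γ' (candCount0 p lam tau t) + (α - w₀) * F t) :=
            mul_le_mul_of_nonneg_left hB (pow_nonneg hδ0.le _)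
        _ = w₀ * (δ ^ (T - t) * (1 * γ' (candCount0 p lam tau t)))
            + (α - w₀) * (δ ^ (T - t) * (1 * F t)) := by ring
        _ = _ := by rw [hcc]
    · rw [if_neg hc]
      simp
  have hsum1 : ∑ t ∈ Finset.Icc 1 T,
      δ ^ (T - t) * A t * (if lam < p t ∧ p t ≤ tau then (1 : ℝ) else 0) / (tau - lam)
      ≤ w₀ * ∑ t ∈ Finset.Icc 1 T, (δ ^ (T - t) * ((if lam < p t ∧ p t ≤ tau then (1 : ℝ) else 0) *
              γ' (1 + candBetween p lam tau 1 (t - 1))))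
        + (α - w₀) * ∑ t ∈ Finset.Icc 1 T, (δ ^ (T - t) * ((if lam < p t ∧ p t ≤ tau then (1 : ℝ) else 0) *
              F t)) := by
    rw [Finset.mul_sum, Finset.mul_sum, ← Finset.sum_add_distrib]
    exact Finset.sum_le_sum key1
  -- Step 2: the γ' part is at most 1
  have hS1 : ∑ t ∈ Finset.Icc 1 T, (δ ^ (T - t) * ((if lam < p t ∧ p t ≤ tau then (1 : ℝ) else 0) *
        γ' (1 + candBetween p lam tau 1 (t - 1)))) ≤ 1 := by
    refine le_trans (gamma'_block δ hδ0.le hδ1 γ' (fun t ht => (hγ'_pos t ht).le) p lam tau T) ?_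
    rcases Nat.eq_zero_or_pos (candBetween p lam tau 1 T) with h0 | h0
    · rw [h0]; simp
    · exact hγ'_sum _ h0
  -- Step 3: the γ part
  have hFt : ∀ t ∈ Finset.Icc 1 T,
      F t = ∑ j ∈ Finset.range T, addisTerm δ γ p lam tau t (rejTime R (j + 1)) := by
    intro t ht
    rw [Finset.mem_Icc] at ht
    refine tsum_eq_sum ?_
    intro j hj
    rw [Finset.mem_range, not_lt] at hj
    cases hρ : rejTime R (j + 1) with
    | top => simp [addisTerm]
    | coe m =>
      have hjm : j + 1 ≤ m := rejTime_lower R hR hρ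
      exact addisTerm_eq_zero_of_le δ γ hγ00 p lam tau (by omega)
  set bnd : ℕ → ℝ := fun j => (rejTime R (j + 1)).recTopCoe 0
      (fun m => if m ≤ T then δ ^ (T - m) else 0) with hbnd
  have hinner : ∀ j ∈ Finset.range T,
      ∑ t ∈ Finset.Icc 1 T, δ ^ (T - t) * ((if lam < p t ∧ p t ≤ tau then (1 : ℝ) else 0) *
        addisTerm δ γ p lam tau t (rejTime R (j + 1))) ≤ bnd j := by
    intro j _
    cases hρ : rejTime R (j + 1) with
    | top =>
      rw [hbnd]
      simp only [hρ, ENat.recTopCoe_top]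
      refine le_of_eq (Finset.sum_eq_zero fun t _ => ?_)
      simp [addisTerm]
    | coe m =>
      rw [hbnd]
      simp only [hρ, ENat.recTopCoe_coe]
      by_cases hmT : m ≤ T
      · rw [if_pos hmT]
        have hsub : Finset.Icc (m + 1) T ⊆ Finset.Icc 1 T := by
          intro x hx
          rw [Finset.mem_Icc] at *
          omega
        have hzero : ∀ t ∈ Finset.Icc 1 T, t ∉ Finset.Icc (m + 1) T →
            δ ^ (T - t) * ((if lam < p t ∧ p t ≤ tau then (1 : ℝ) else 0) *
              addisTerm δ γ p lam tau t ((m : ℕ∞))) = 0 := by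
          intro t ht hnt
          rw [Finset.mem_Icc] at ht
          rw [Finset.mem_Icc, not_and_or, not_le, not_le] at hnt
          have htm : t ≤ m := by omega
          rw [addisTerm_eq_zero_of_le δ γ hγ00 p lam tau htm]
          ring
        rw [← Finset.sum_subset hsub hzero]
        have heach : ∀ t ∈ Finset.Icc (m + 1) T,
            δ ^ (T - t) * ((if lam < p t ∧ p t ≤ tau then (1 : ℝ) else 0) *
              addisTerm δ γ p lam tau t ((m : ℕ∞)))
            = δ ^ (T - m) * ((if lam < p t ∧ p t ≤ tau then (1 : ℝ) else 0) *
                γ (1 + (candBetween p lam tau (m + 1) (t - 1) : ℤ))) := by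
          intro t ht
          rw [Finset.mem_Icc] at ht
          rw [addisTerm_coe, if_pos (by omega : m < t)]
          rw [show δ ^ (T - m) = δ ^ (T - t) * δ ^ (t - m) by
            rw [← pow_add]; congr 1; omega]
          ring
        rw [Finset.sum_congr rfl heach, ← Finset.mul_sum]
        calc δ ^ (T - m) * ∑ t ∈ Finset.Icc (m + 1) T,
              ((if lam < p t ∧ p t ≤ tau then (1 : ℝ) else 0) *
                γ (1 + (candBetween p lam tau (m + 1) (t - 1) : ℤ)))
            ≤ δ ^ (T - m) * ∑ i ∈ Finset.Icc 1 (candBetween p lam tau (m + 1) T), γ (i : ℤ) := by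
              refine mul_le_mul_of_nonneg_left ?_ (pow_nonneg hδ0.le _)
              exact gamma_block γ hγ_nonneg p lam tau m T
          _ ≤ δ ^ (T - m) * 1 := by
              refine mul_le_mul_of_nonneg_left ?_ (pow_nonneg hδ0.le _)
              have := hγ_sum (candBetween p lam tau (m + 1) T)
              exact_mod_cast this
          _ = δ ^ (T - m) := mul_one _
      · rw [if_neg hmT]
        refine le_of_eq (Finset.sum_eq_zero fun t ht => ?_)
        rw [Finset.mem_Icc] at ht
        rw [addisTerm_eq_zero_of_le δ γ hγ00 p lam tau (by omega : t ≤ m)]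
        ring
  -- bound the sum of bnd by the rejection sum
  have hbndsum : ∑ j ∈ Finset.range T, bnd j ≤ ∑ t ∈ Finset.Icc 1 T, δ ^ (T - t) * R t := by
    set J : Finset ℕ := (Finset.range T).filter
      (fun j => ∃ m : ℕ, rejTime R (j + 1) = (m : ℕ∞) ∧ m ≤ T) with hJ
    have hstep1 : ∑ j ∈ Finset.range T, bnd j = ∑ j ∈ J, bnd j := by
      rw [hJ]
      refine (Finset.sum_filter_of_ne ?_).symm
      intro j _ hne
      by_contra hno
      push_neg at hno
      apply hne
      cases hρ : rejTime R (j + 1) with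
      | top => rw [hbnd]; simp only [hρ, ENat.recTopCoe_top]
      | coe m =>
        rw [hbnd]
        simp only [hρ, ENat.recTopCoe_coe]
        rw [if_neg (by have := hno m hρ; omega : ¬ m ≤ T)]
    have hstep2 : ∑ j ∈ J, bnd j = ∑ j ∈ J, δ ^ (T - (rejTime R (j + 1)).toNat) := by
      refine Finset.sum_congr rfl fun j hj => ?_
      rw [hJ, Finset.mem_filter] at hj
      obtain ⟨_, m, hρ, hmT⟩ := hj
      rw [hbnd]
      simp only [hρ, ENat.recTopCoe_coe, ENat.toNat_coe]
      rw [if_pos hmT]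
    have hinj : ∀ x ∈ J, ∀ y ∈ J, (rejTime R (x + 1)).toNat = (rejTime R (y + 1)).toNat → x = y := by
      intro x hx y hy hxy
      rw [hJ, Finset.mem_filter] at hx hy
      obtain ⟨_, mx, hρx, _⟩ := hx
      obtain ⟨_, my, hρy, _⟩ := hy
      rw [hρx, hρy, ENat.toNat_coe, ENat.toNat_coe] at hxy
      subst hxy
      by_contra hne
      rcases Nat.lt_or_ge x y with hlt | hge
      · exact rejTime_inj R hR (by omega : x + 1 < y + 1) hρx hρy
      · have : y < x := by omega
        exact rejTime_inj R hR (by omega : y + 1 < x + 1) hρy hρx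
    have hstep3 : ∑ j ∈ J, δ ^ (T - (rejTime R (j + 1)).toNat)
        = ∑ t ∈ J.image (fun j => (rejTime R (j + 1)).toNat), δ ^ (T - t) := by
      rw [Finset.sum_image hinj]
    have himg : J.image (fun j => (rejTime R (j + 1)).toNat) ⊆ Finset.Icc 1 T := by
      intro t ht
      rw [Finset.mem_image] at ht
      obtain ⟨j, hj, hjt⟩ := ht
      rw [hJ, Finset.mem_filter] at hj
      obtain ⟨_, m, hρ, hmT⟩ := hj
      rw [hρ, ENat.toNat_coe] at hjt
      subst hjt
      rw [Finset.mem_Icc]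
      have := rejTime_lower R hR hρ
      omega
    have hR1 : ∀ t ∈ J.image (fun j => (rejTime R (j + 1)).toNat), R t = 1 := by
      intro t ht
      rw [Finset.mem_image] at ht
      obtain ⟨j, hj, hjt⟩ := ht
      rw [hJ, Finset.mem_filter] at hj
      obtain ⟨_, m, hρ, hmT⟩ := hj
      rw [hρ, ENat.toNat_coe] at hjt
      subst hjt
      exact rejTime_R_one R hR (by omega) hρ
    have hstep4 : ∑ t ∈ J.image (fun j => (rejTime R (j + 1)).toNat), δ ^ (T - t)
        ≤ ∑ t ∈ Finset.Icc 1 T, δ ^ (T - t) * R t := by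
      have : ∑ t ∈ J.image (fun j => (rejTime R (j + 1)).toNat), δ ^ (T - t)
          = ∑ t ∈ J.image (fun j => (rejTime R (j + 1)).toNat), δ ^ (T - t) * R t := by
        refine Finset.sum_congr rfl fun t ht => ?_
        rw [hR1 t ht, mul_one]
      rw [this]
      refine Finset.sum_le_sum_of_subset_of_nonneg himg fun t _ _ => ?_
      rcases hR t with h | h <;> rw [h] <;> [simp; positivity]
    rw [hstep1, hstep2, hstep3]
    exact hstep4
  have hS2 : ∑ t ∈ Finset.Icc 1 T, (δ ^ (T - t) * ((if lam < p t ∧ p t ≤ tau then (1 : ℝ) else 0) *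
        F t)) ≤ ∑ t ∈ Finset.Icc 1 T, δ ^ (T - t) * R t := by
    have hswap : ∑ t ∈ Finset.Icc 1 T, (δ ^ (T - t) * ((if lam < p t ∧ p t ≤ tau then (1 : ℝ) else 0) *
          F t))
        = ∑ j ∈ Finset.range T, ∑ t ∈ Finset.Icc 1 T,
            δ ^ (T - t) * ((if lam < p t ∧ p t ≤ tau then (1 : ℝ) else 0) *
              addisTerm δ γ p lam tau t (rejTime R (j + 1))) := by
      rw [← Finset.sum_comm]
      refine Finset.sum_congr rfl fun t ht => ?_
      rw [hFt t ht, Finset.mul_sum, Finset.mul_sum]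
    rw [hswap]
    exact le_trans (Finset.sum_le_sum hinner) hbndsum
  -- Final assembly
  have hM1 : (1 : ℝ) ≤ max (∑ t ∈ Finset.Icc 1 T, δ ^ (T - t) * R t) 1 := le_max_right _ _
  have hM2 : ∑ t ∈ Finset.Icc 1 T, δ ^ (T - t) * R t
      ≤ max (∑ t ∈ Finset.Icc 1 T, δ ^ (T - t) * R t) 1 := le_max_left _ _
  refine le_trans hsum1 ?_
  have h1 : w₀ * ∑ t ∈ Finset.Icc 1 T, (δ ^ (T - t) * ((if lam < p t ∧ p t ≤ tau then (1 : ℝ) else 0) *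
        γ' (1 + candBetween p lam tau 1 (t - 1))))
      ≤ w₀ * max (∑ t ∈ Finset.Icc 1 T, δ ^ (T - t) * R t) 1 :=
    mul_le_mul_of_nonneg_left (le_trans hS1 hM1) hw0.le
  have h2 : (α - w₀) * ∑ t ∈ Finset.Icc 1 T, (δ ^ (T - t) * ((if lam < p t ∧ p t ≤ tau then (1 : ℝ) else 0) *
        F t))
      ≤ (α - w₀) * max (∑ t ∈ Finset.Icc 1 T, δ ^ (T - t) * R t) 1 :=
    mul_le_mul_of_nonneg_left (le_trans hS2 hM2) (by linarith)
  calc _ ≤ w₀ * max (∑ t ∈ Finset.Icc 1 T, δ ^ (T - t) * R t) 1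
        + (α - w₀) * max (∑ t ∈ Finset.Icc 1 T, δ ^ (T - t) * R t) 1 := add_le_add h1 h2
    _ = α * max (∑ t ∈ Finset.Icc 1 T, δ ^ (T - t) * R t) 1 := by ring
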